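/- Every 𝔟-generalized tower in [ℕ]^∞ is a Fin-scale: for each z ∈ [ℕ]^∞ there exists t ∈ [ℕ]^∞ such that z ≤^∞ t (meaning e_t(n) ≥ e_z(n) for infinitely many n, i.e., e_t ≤* e_z fails) and e_t ≤* e_x for all but fewer than 𝔟 elements x of the tower. -/

import Mathlib

open Set Filter

/-- Increasing enumeration of a subset of ℕ. -/
noncomputable def enum (x : Set ℕ) : ℕ → ℕ := Nat.nth (· ∈ x)

/-- `X ⊆ [ℕ]^∞` is a `κ`-generalized tower. -/
def IsGenTower (κ : Cardinal) (X : Set (Set ℕ)) : Prop :=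
  (∀ x ∈ X, x.Infinite) ∧ κ ≤ Cardinal.mk X ∧
  ∀ a : ℕ → ℕ, StrictMono a → ∃ b : Set ℕ, b.Infinite ∧
    ∃ S : Set (Set ℕ), S ⊆ X ∧ Cardinal.mk S < κ ∧
      ∀ x ∈ X \ S, (x ∩ ⋃ n ∈ b, Set.Ico (a n) (a (n + 1))).Finite

/-- The bounding number 𝔟: the minimal cardinality of an unbounded
family in `(ℕ → ℕ, ≤*)`. -/
noncomputable def bNum : Cardinal :=
  sInf {c | ∃ F : Set (ℕ → ℕ), Cardinal.mk F = c ∧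
    ∀ g : ℕ → ℕ, ∃ f ∈ F, {n | g n < f n}.Infinite}

/-- Offset version of strict monotonicity on ℕ. -/
lemma strictMono_add_le {f : ℕ → ℕ} (hf : StrictMono f) (n d : ℕ) :
    f n + d ≤ f (n + d) := by
  induction d with
  | zero => simp
  | succ d ih =>
    have h2 : f (n + d) < f (n + d + 1) := hf (Nat.lt_succ_self _)
    have h3 : n + (d + 1) = n + d + 1 := rfl
    rw [h3]
    omega

/-- The increasing enumeration of the range of a strictly monotone
function is the function itself. -/
lemma nth_range_strictMono {f : ℕ → ℕ} (hf : StrictMono f) (n : ℕ) :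
    Nat.nth (· ∈ Set.range f) n = f n := by
  classical
  have hcount : Nat.count (· ∈ Set.range f) (f n) = n := by
    rw [Nat.count_eq_card_filter_range]
    have him : {x ∈ Finset.range (f n) | x ∈ Set.range f} =
        (Finset.range n).image f := by
      ext k
      simp only [Finset.mem_filter, Finset.mem_range, Finset.mem_image,
        Set.mem_range]
      constructor
      · rintro ⟨hk, j, rfl⟩
        exact ⟨j, hf.lt_iff_lt.mp hk, rfl⟩
      · rintro ⟨j, hj, rfl⟩
        exact ⟨hf hj, j, rfl⟩
    rw [him, Finset.card_image_of_injective _ hf.injective, Finset.card_range]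
  have := Nat.nth_count (p := (· ∈ Set.range f)) (n := f n) ⟨n, rfl⟩
  rwa [hcount] at this

/-- Fast-growing skeleton used in the proof of `stmt5`. -/
noncomputable def skel (z : Set ℕ) : ℕ → ℕ
  | 0 => 0
  | m + 1 => 2 * skel z m + enum z (skel z m) + 1

/-- Every 𝔟-generalized tower is a `Fin`-scale. -/
theorem stmt5 (X : Set (Set ℕ)) (hX : IsGenTower bNum X) :
    ∀ z : Set ℕ, z.Infinite → ∃ t : Set ℕ, t.Infinite ∧
      {n | enum z n ≤ enum t n}.Infinite ∧
      ∃ S : Set (Set ℕ), S ⊆ X ∧ Cardinal.mk S < bNum ∧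
        ∀ x ∈ X \ S, ∀ᶠ n in atTop, enum t n ≤ enum x n := by
  classical
  obtain ⟨hinf, -, htow⟩ := hX
  intro z hz
  -- a fast-growing interval skeleton
  set a : ℕ → ℕ := skel z with hadef
  have ha_succ : ∀ m, a (m + 1) = 2 * a m + enum z (a m) + 1 := fun m => rfl
  have ha_mono : StrictMono a := strictMono_nat_of_lt_succ (fun m => by
    rw [ha_succ]; omega)
  obtain ⟨b, hb, S, hSX, hScard, hS⟩ := htow a ha_mono
  -- the enumeration of b
  let g : ℕ → ℕ := Nat.nth (· ∈ b)
  have hbset : {n | n ∈ b}.Infinite := hb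
  have hg : StrictMono g := Nat.nth_strictMono hbset
  have hgb : ∀ i, g i ∈ b := fun i => Nat.nth_mem_of_infinite hbset i
  set c : ℕ → ℕ := fun i => a (g i) with hcdef
  have hc : StrictMono c := ha_mono.comp hg
  have hgrow : ∀ n m, n ≤ m → a n + a m < a (m + 1) := by
    intro n m hnm
    have := ha_mono.monotone hnm
    rw [ha_succ]; omega
  -- the index of the block containing k
  set I : ℕ → ℕ := fun k => Nat.findGreatest (fun i => c i ≤ k) k with hIdef
  have hI3 : ∀ k i, c i ≤ k → i ≤ I k := by
    intro k i h
    simp only [hIdef]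
    exact Nat.le_findGreatest (le_trans hc.le_apply h) h
  have hI1 : ∀ k, c 0 ≤ k → c (I k) ≤ k := by
    intro k h
    simp only [hIdef]
    exact Nat.findGreatest_spec (P := fun i => c i ≤ k) (Nat.zero_le k) h
  have hI2 : ∀ k, k < c (I k + 1) := by
    intro k
    by_contra hcon
    push_neg at hcon
    have := hI3 k (I k + 1) hcon
    omega
  have hIc : ∀ i, I (c i) = i := by
    intro i
    have h1 : i ≤ I (c i) := hI3 _ i le_rfl
    have h2 : c (I (c i)) ≤ c i := hI1 _ (hc.monotone (Nat.zero_le i))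
    have := hc.le_iff_le.mp h2
    omega
  -- the slow function f
  set f : ℕ → ℕ := fun k =>
    if k < c 0 then k else a (g (I k) + 1) + (k - c (I k)) with hfdef
  have hfc : ∀ i, f (c i) = a (g i + 1) := by
    intro i
    have h0 : ¬ c i < c 0 := by
      have := hc.monotone (Nat.zero_le i); omega
    simp only [hfdef, if_neg h0, hIc i, Nat.sub_self, Nat.add_zero]
  have hf : StrictMono f := by
    apply strictMono_nat_of_lt_succ
    intro k
    by_cases h1 : k + 1 < c 0
    · have h2 : k < c 0 := by omega
      simp only [hfdef, if_pos h1, if_pos h2]; omega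
    · push_neg at h1
      by_cases h2 : k < c 0
      · -- k + 1 = c 0
        have hk1 : k + 1 = c 0 := by omega
        have hfk1 : f (k + 1) = a (g 0 + 1) := by rw [hk1]; exact hfc 0
        have hfk : f k = k := by simp only [hfdef, if_pos h2]
        have hlt : a (g 0) < a (g 0 + 1) := ha_mono (Nat.lt_succ_self _)
        have hc0 : c 0 = a (g 0) := rfl
        omega
      · push_neg at h2
        have hik : c (I k) ≤ k := hI1 k h2
        have hik2 : k < c (I k + 1) := hI2 k
        have hmono : I k ≤ I (k + 1) := hI3 _ _ (le_trans hik (by omega))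
        by_cases heq : I (k + 1) = I k
        · have h3 : ¬ k < c 0 := by omega
          have h4 : ¬ k + 1 < c 0 := by omega
          simp only [hfdef, if_neg h3, if_neg h4, heq]
          omega
        · -- I (k+1) > I k ; then c (I (k+1)) = k + 1
          have hjlt : I k < I (k + 1) := lt_of_le_of_ne hmono (Ne.symm heq)
          have hj1 : c (I (k + 1)) ≤ k + 1 := hI1 (k + 1) (by omega)
          have hj2 : c (I k + 1) ≤ c (I (k + 1)) := hc.monotone (by omega)
          have hj3 : c (I (k + 1)) = k + 1 := by omega
          have h3 : ¬ k < c 0 := by omega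
          have h4 : ¬ k + 1 < c 0 := by omega
          simp only [hfdef, if_neg h3, if_neg h4, hj3, Nat.sub_self,
            Nat.add_zero]
          -- f k = a (g (I k) + 1) + (k - c (I k)) < a (g (I (k+1)) + 1)
          have e1 : k - c (I k) < c (I k + 1) := by omega
          have e2 : c (I k + 1) = a (g (I k + 1)) := rfl
          have e3 : g (I k) + 1 ≤ g (I k + 1) := hg (Nat.lt_succ_self _)
          have e4 : a (g (I k) + 1) + a (g (I k + 1)) < a (g (I k + 1) + 1) :=
            hgrow _ _ (ha_mono.le_iff_le.mp (ha_mono.monotone e3))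
          have e5 : g (I k + 1) + 1 ≤ g (I (k + 1)) + 1 := by
            have := hg.monotone (show I k + 1 ≤ I (k + 1) by omega); omega
          have e6 : a (g (I k + 1) + 1) ≤ a (g (I (k + 1)) + 1) :=
            ha_mono.monotone e5
          omega
  refine ⟨Set.range f, Set.infinite_range_of_injective hf.injective, ?_, S,
    hSX, hScard, ?_⟩
  · -- z ≤^∞ t : witnessed at the indices c i
    have hsub : Set.range c ⊆ {n | enum z n ≤ enum (Set.range f) n} := by
      rintro _ ⟨i, rfl⟩
      have h1 : enum (Set.range f) (c i) = f (c i) := nth_range_strictMono hf _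
      rw [Set.mem_setOf_eq, h1, hfc i]
      show enum z (a (g i)) ≤ a (g i + 1)
      rw [ha_succ]
      omega
    exact (Set.infinite_range_of_injective hc.injective).mono hsub
  · -- e_t ≤* e_x for x outside S
    intro x hx
    have hxU := hS x hx
    have hxinf : x.Infinite := hinf x hx.1
    have hxset : {n | n ∈ x}.Infinite := hxinf
    -- only finitely many blocks meet x
    set T : Set ℕ := {i | (x ∩ Set.Ico (c i) (a (g i + 1))).Nonempty} with hTdef
    have hT : T.Finite := by
      set φ : ℕ → ℕ := fun i =>
        if h : (x ∩ Set.Ico (c i) (a (g i + 1))).Nonempty then h.choose else 0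
        with hφdef
      have hφmem : ∀ i ∈ T, φ i ∈ x ∩ Set.Ico (c i) (a (g i + 1)) := by
        intro i hi
        have hi' : (x ∩ Set.Ico (c i) (a (g i + 1))).Nonempty := hi
        simp only [hφdef, dif_pos hi']
        exact hi'.choose_spec
      apply Set.Finite.of_finite_image (f := φ)
      · apply hxU.subset
        rintro _ ⟨i, hi, rfl⟩
        obtain ⟨hφx, hφlo, hφhi⟩ := hφmem i hi
        refine ⟨hφx, ?_⟩
        exact Set.mem_biUnion (hgb i) ⟨hφlo, hφhi⟩
      · have key : ∀ i ∈ T, ∀ j ∈ T, i < j → φ i < φ j := by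
          intro i hi j hj hltij
          obtain ⟨-, -, h1⟩ := hφmem i hi
          obtain ⟨-, h2, -⟩ := hφmem j hj
          have h3 : g i + 1 ≤ g j := hg hltij
          have h4 : a (g i + 1) ≤ a (g j) := ha_mono.monotone h3
          have h5 : c j = a (g j) := rfl
          omega
        intro i hi j hj hij
        rcases lt_trichotomy i j with h | h | h
        · have := key i hi j hj h; omega
        · exact h
        · have := key j hj i hi h; omega
    obtain ⟨B, hB⟩ := hT.bddAbove
    rw [eventually_atTop]
    refine ⟨c (B + 1), ?_⟩
    intro k hk
    have hkc0 : c 0 ≤ k := le_trans (hc.monotone (Nat.zero_le _)) hk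
    set i := I k with hidef
    have hi1 : c i ≤ k := hI1 k hkc0
    have hi2 : k < c (i + 1) := hI2 k
    have hiB : B + 1 ≤ i := hI3 k (B + 1) hk
    have hiT : i ∉ T := fun h => by have := hB h; omega
    -- x misses the block [c i, a (g i + 1))
    have hempty : ∀ m, m ∈ x → m < a (g i + 1) → m < c i := by
      intro m hm hlt
      by_contra hcon
      push_neg at hcon
      exact hiT ⟨m, hm, hcon, hlt⟩
    -- so the (c i)-th element of x is at least a (g i + 1)
    have hcount : Nat.count (· ∈ x) (a (g i + 1)) ≤ c i := by
      rw [Nat.count_eq_card_filter_range]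
      have : {m ∈ Finset.range (a (g i + 1)) | m ∈ x} ⊆ Finset.range (c i) := by
        intro m hm
        simp only [Finset.mem_filter, Finset.mem_range] at hm ⊢
        exact hempty m hm.2 hm.1
      calc ({m ∈ Finset.range (a (g i + 1)) | m ∈ x}).card
          ≤ (Finset.range (c i)).card := Finset.card_le_card this
        _ = c i := Finset.card_range _
    have hnth : a (g i + 1) ≤ Nat.nth (· ∈ x) (c i) :=
      (Nat.count_le_iff_le_nth hxset).mp hcount
    have hoff : Nat.nth (· ∈ x) (c i) + (k - c i) ≤ Nat.nth (· ∈ x) k := by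
      have := strictMono_add_le (Nat.nth_strictMono hxset) (c i) (k - c i)
      rwa [show c i + (k - c i) = k by omega] at this
    have hft : enum (Set.range f) k = f k := nth_range_strictMono hf _
    have hfk : f k = a (g i + 1) + (k - c i) := by
      simp only [hfdef, if_neg (show ¬ k < c 0 by omega)]
      rfl
    show enum (Set.range f) k ≤ enum x k
    rw [hft, hfk]
    exact le_trans (by omega) hoff
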